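/- For real p with 1 < p < n (n > 1 an integer): μ(p',n) = π_{p,n} / (2(sin(π/p)·cot(π/n) - cos(π/p))), where p' = p/(p-1). -/

import Mathlib

open Real MeasureTheory Set


lemma realBeta (x y : ℝ) (hx : 0 < x) (hy : 0 < y) :
    (∫ t in (0:ℝ)..1, t ^ (x-1) * (1-t) ^ (y-1))
      = Real.Gamma x * Real.Gamma y / Real.Gamma (x+y) := by
  have h := Complex.Gamma_mul_Gamma_eq_betaIntegral (s := (x:ℂ)) (t := (y:ℂ))
    (by simpa using hx) (by simpa using hy)
  have hcoe : Complex.betaIntegral x y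
      = ((∫ t in (0:ℝ)..1, t ^ (x-1) * (1-t) ^ (y-1) : ℝ) : ℂ) := by
    rw [Complex.betaIntegral, ← intervalIntegral.integral_ofReal]
    refine intervalIntegral.integral_congr fun t ht => ?_
    rw [uIcc_of_le zero_le_one] at ht
    rw [Complex.ofReal_mul, Complex.ofReal_cpow ht.1,
      Complex.ofReal_cpow (by linarith [ht.2] : (0:ℝ) ≤ 1 - t)]
    push_cast
    ring
  rw [hcoe, ← Complex.ofReal_add, Complex.Gamma_ofReal, Complex.Gamma_ofReal,
    Complex.Gamma_ofReal, ← Complex.ofReal_mul, ← Complex.ofReal_mul] at h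
  have h' : Real.Gamma x * Real.Gamma y
      = Real.Gamma (x+y) * ∫ t in (0:ℝ)..1, t ^ (x-1) * (1-t) ^ (y-1) :=
    Complex.ofReal_inj.mp h
  have hpos := Real.Gamma_pos_of_pos (add_pos hx hy)
  field_simp [h']
  rw [h']; ring

lemma subI2 (n : ℕ) (hn : 0 < n) (a : ℝ) :
    (n:ℝ) * ∫ t in (0:ℝ)..1, (1 - t ^ n) ^ (-a)
      = ∫ t in (0:ℝ)..1, t ^ ((1:ℝ)/n - 1) * (1-t) ^ (-a) := by
  have hn0 : (0:ℝ) < n := Nat.cast_pos.mpr hn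
  set f : ℝ → ℝ := (Ioo (0:ℝ) 1).indicator (fun u => u ^ ((1:ℝ)/n - 1) * (1-u) ^ (-a)) with hf
  have key := MeasureTheory.integral_comp_rpow_Ioi f (p := (n:ℝ)) hn0.ne'
  have hRHS : ∫ y in Ioi (0:ℝ), f y = ∫ t in (0:ℝ)..1, t ^ ((1:ℝ)/n - 1) * (1-t) ^ (-a) := by
    rw [hf, MeasureTheory.setIntegral_indicator measurableSet_Ioo,
      inter_eq_self_of_subset_right Ioo_subset_Ioi_self,
      intervalIntegral.integral_of_le zero_le_one, MeasureTheory.integral_Ioc_eq_integral_Ioo]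
  have hLHS : ∫ x in Ioi (0:ℝ), (|(n:ℝ)| * x ^ ((n:ℝ)-1)) • f (x ^ (n:ℝ))
      = (n:ℝ) * ∫ t in (0:ℝ)..1, (1 - t ^ n) ^ (-a) := by
    have hcong : ∀ x ∈ Ioi (0:ℝ), (|(n:ℝ)| * x ^ ((n:ℝ)-1)) • f (x ^ (n:ℝ))
        = (Ioo (0:ℝ) 1).indicator (fun t => (n:ℝ) * (1 - t ^ n) ^ (-a)) x := by
      intro x hx
      have hx0 : (0:ℝ) < x := hx
      rw [abs_of_pos hn0, rpow_natCast x n, smul_eq_mul]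
      by_cases hx1 : x < 1
      · have hxn : x ^ n ∈ Ioo (0:ℝ) 1 := ⟨pow_pos hx0 n, pow_lt_one₀ hx0.le hx1 hn.ne'⟩
        have hmem : x ∈ Ioo (0:ℝ) 1 := ⟨hx0, hx1⟩
        rw [hf]
        simp only [indicator_of_mem hxn, indicator_of_mem hmem]
        have hxe : x ^ ((n:ℝ)-1) * (x ^ n) ^ ((1:ℝ)/n - 1) = 1 := by
          rw [← rpow_natCast x n, ← rpow_mul hx0.le, ← rpow_add hx0,
            show ((n:ℝ)-1) + (n:ℝ)*((1:ℝ)/n - 1) = 0 by field_simp; ring, rpow_zero]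
        linear_combination ((n:ℝ) * (1 - x ^ n) ^ (-a)) * hxe
      · have hxn : x ^ n ∉ Ioo (0:ℝ) 1 := fun h =>
          absurd h.2 (not_lt.mpr (one_le_pow₀ (not_lt.mp hx1)))
        rw [hf, indicator_of_notMem hxn,
          indicator_of_notMem (fun h => hx1 h.2), mul_zero]
    rw [MeasureTheory.setIntegral_congr_fun measurableSet_Ioi hcong,
      MeasureTheory.setIntegral_indicator measurableSet_Ioo,
      inter_eq_self_of_subset_right Ioo_subset_Ioi_self,
      intervalIntegral.integral_of_le zero_le_one, MeasureTheory.integral_Ioc_eq_integral_Ioo,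
      MeasureTheory.integral_const_mul]
  rw [← hLHS, key, hRHS]

lemma subI1 (n : ℕ) (hn : 0 < n) (a : ℝ) :
    (n:ℝ) * ∫ t in Ioi (1:ℝ), (t ^ n - 1) ^ (-a)
      = ∫ t in (0:ℝ)..1, t ^ ((a - 1/n) - 1) * (1-t) ^ (-a) := by
  have hn0 : (0:ℝ) < n := Nat.cast_pos.mpr hn
  set f : ℝ → ℝ := (Ioo (0:ℝ) 1).indicator
    (fun u => u ^ ((a - 1/n) - 1) * (1-u) ^ (-a)) with hf
  have key := MeasureTheory.integral_comp_rpow_Ioi f (p := -(n:ℝ)) (by simpa using hn0.ne')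
  have hRHS : ∫ y in Ioi (0:ℝ), f y = ∫ t in (0:ℝ)..1, t ^ ((a - 1/n) - 1) * (1-t) ^ (-a) := by
    rw [hf, MeasureTheory.setIntegral_indicator measurableSet_Ioo,
      inter_eq_self_of_subset_right Ioo_subset_Ioi_self,
      intervalIntegral.integral_of_le zero_le_one, MeasureTheory.integral_Ioc_eq_integral_Ioo]
  have hLHS : ∫ x in Ioi (0:ℝ), (|-(n:ℝ)| * x ^ (-(n:ℝ)-1)) • f (x ^ (-(n:ℝ)))
      = (n:ℝ) * ∫ t in Ioi (1:ℝ), (t ^ n - 1) ^ (-a) := by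
    have hcong : ∀ x ∈ Ioi (0:ℝ), (|-(n:ℝ)| * x ^ (-(n:ℝ)-1)) • f (x ^ (-(n:ℝ)))
        = (Ioi (1:ℝ)).indicator (fun t => (n:ℝ) * (t ^ n - 1) ^ (-a)) x := by
      intro x hx
      have hx0 : (0:ℝ) < x := hx
      have habs : |-(n:ℝ)| = (n:ℝ) := by rw [abs_neg, abs_of_pos hn0]
      rw [habs, smul_eq_mul, hf]
      by_cases hx1 : 1 < x
      · have hX1 : 1 < x ^ n := one_lt_pow₀ hx1 hn.ne'
        have hXpos : (0:ℝ) < x ^ n := lt_trans one_pos hX1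
        have hinv : x ^ (-(n:ℝ)) = (x ^ n)⁻¹ := by
          rw [rpow_neg hx0.le, rpow_natCast]
        have hmem : x ^ (-(n:ℝ)) ∈ Ioo (0:ℝ) 1 := by
          rw [hinv]
          exact ⟨inv_pos.mpr hXpos, inv_lt_one_of_one_lt₀ hX1⟩
        have hmem' : x ∈ Ioi (1:ℝ) := hx1
        simp only [indicator_of_mem hmem, indicator_of_mem hmem']
        have h1m : 1 - x ^ (-(n:ℝ)) = (x ^ n - 1) * x ^ (-(n:ℝ)) := by
          rw [hinv]; field_simp
        have hsplit : (1 - x ^ (-(n:ℝ))) ^ (-a)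
            = (x ^ n - 1) ^ (-a) * x ^ ((n:ℝ) * a) := by
          rw [h1m, mul_rpow (sub_nonneg.mpr hX1.le) (rpow_nonneg hx0.le _),
            ← rpow_mul hx0.le, neg_mul_neg]
        have hpow : (x ^ (-(n:ℝ))) ^ ((a - 1/n) - 1) = x ^ (-(n:ℝ) * ((a - 1/n) - 1)) :=
          (rpow_mul hx0.le _ _).symm
        rw [hsplit, hpow]
        have hxe : x ^ (-(n:ℝ)-1) * (x ^ (-(n:ℝ) * ((a - 1/n) - 1)) * x ^ ((n:ℝ) * a)) = 1 := by
          rw [← rpow_add hx0, ← rpow_add hx0,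
            show (-(n:ℝ)-1) + (-(n:ℝ) * ((a - 1/n) - 1) + (n:ℝ) * a) = 0 by field_simp; ring,
            rpow_zero]
        linear_combination ((n:ℝ) * (x ^ n - 1) ^ (-a)) * hxe
      · have hge : 1 ≤ x ^ (-(n:ℝ)) :=
          one_le_rpow_of_pos_of_le_one_of_nonpos hx0 (not_lt.mp hx1)
            (neg_nonpos.mpr hn0.le)
        rw [indicator_of_notMem (fun h => absurd h.2 (not_lt.mpr hge)),
          indicator_of_notMem (show x ∉ Ioi (1:ℝ) by simpa using hx1), mul_zero]
    rw [MeasureTheory.setIntegral_congr_fun measurableSet_Ioi hcong,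
      MeasureTheory.setIntegral_indicator measurableSet_Ioi,
      inter_eq_self_of_subset_right (Ioi_subset_Ioi zero_le_one),
      MeasureTheory.integral_const_mul]
  rw [← hLHS, key, hRHS]

lemma ratio (a b : ℝ) (hb : 0 < b) (hba : b < a) (ha1 : a < 1) :
    Real.Gamma (a-b) * Real.Gamma (1-a) / Real.Gamma ((a-b) + (1-a))
      * (Real.sin (π*(a-b)) / Real.sin (π*b))
    = Real.Gamma b * Real.Gamma (1-a) / Real.Gamma (b + (1-a)) := by
  have hab0 : 0 < a - b := sub_pos.mpr hba
  have hab1 : a - b < 1 := by linarith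
  have hS1 : 0 < Real.sin (π*(a-b)) :=
    Real.sin_pos_of_pos_of_lt_pi (by positivity) (by nlinarith [Real.pi_pos])
  have hS2 : 0 < Real.sin (π*b) :=
    Real.sin_pos_of_pos_of_lt_pi (by positivity) (by nlinarith [Real.pi_pos])
  have h1 := Real.Gamma_mul_Gamma_one_sub (a-b)
  have h2 := Real.Gamma_mul_Gamma_one_sub b
  have h1' : Real.Gamma (a-b) * Real.Gamma (1-(a-b)) * Real.sin (π*(a-b)) = π := by
    rw [h1, div_mul_cancel₀ _ hS1.ne']
  have h2' : Real.Gamma b * Real.Gamma (1-b) * Real.sin (π*b) = π := by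
    rw [h2, div_mul_cancel₀ _ hS2.ne']
  have e1 : (a-b) + (1-a) = 1 - b := by ring
  have e2 : b + (1-a) = 1 - (a-b) := by ring
  rw [e1, e2]
  have hG1 : 0 < Real.Gamma (1-b) := Real.Gamma_pos_of_pos (by linarith)
  have hG2 : 0 < Real.Gamma (1-(a-b)) := Real.Gamma_pos_of_pos (by linarith)
  field_simp
  rw [mul_comm (a-b) π, mul_comm b π, div_eq_iff hS2.ne']
  linear_combination (Real.Gamma (1-a)) * h1' - (Real.Gamma (1-a)) * h2'


theorem stmt_8 (p : ℝ) (n : ℕ) (hp : 1 < p) (hn : 1 < n) (hpn : p < n) :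
    (∫ t in Ioi (1:ℝ), (t ^ n - 1) ^ (-(1/p)))
      = (2 * ∫ t in (0:ℝ)..1, (1 - t ^ n) ^ (-(1/p)))
        / (2 * (Real.sin (π / p) * (Real.cos (π / n) / Real.sin (π / n))
            - Real.cos (π / p))) := by
  have hp0 : (0:ℝ) < p := lt_trans one_pos hp
  have hn0 : (0:ℝ) < n := by exact_mod_cast lt_trans one_pos (Nat.one_lt_cast.mpr hn)
  set a : ℝ := 1/p with hadef
  set b : ℝ := 1/(n:ℝ) with hbdef
  have hb0 : 0 < b := by positivity
  have hba : b < a := by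
    rw [hadef, hbdef]
    exact one_div_lt_one_div_of_lt hp0 hpn
  have ha1 : a < 1 := by
    rw [hadef, div_lt_one hp0]; exact hp
  have ha0 : 0 < a := by positivity
  -- substitutions
  have hs1 := subI1 n (lt_trans one_pos hn) a
  have hs2 := subI2 n (lt_trans one_pos hn) a
  -- beta values
  have hB1 := realBeta (a - b) (1 - a) (sub_pos.mpr hba) (by linarith)
  have hB2 := realBeta b (1 - a) hb0 (by linarith)
  rw [hbdef] at hB1 hB2
  rw [show (1:ℝ) - a - 1 = -a from by ring] at hB1 hB2
  have hJ1 : (n:ℝ) * ∫ t in Ioi (1:ℝ), (t ^ n - 1) ^ (-a)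
      = Real.Gamma (a-b) * Real.Gamma (1-a) / Real.Gamma ((a-b) + (1-a)) := by
    rw [hs1, hbdef, ← hB1]
  have hJ2 : (n:ℝ) * ∫ t in (0:ℝ)..1, (1 - t ^ n) ^ (-a)
      = Real.Gamma b * Real.Gamma (1-a) / Real.Gamma (b + (1-a)) := by
    rw [hs2, hbdef, ← hB2]
  have hr := ratio a b hb0 hba ha1
  -- trig
  have hab0 : 0 < a - b := sub_pos.mpr hba
  have hab1 : a - b < 1 := by linarith
  have hS1 : 0 < Real.sin (π*(a-b)) :=
    Real.sin_pos_of_pos_of_lt_pi (by positivity) (by nlinarith [Real.pi_pos])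
  have hS2 : 0 < Real.sin (π*b) :=
    Real.sin_pos_of_pos_of_lt_pi (by positivity) (by nlinarith [Real.pi_pos, hb0, hba, ha1])
  have hpa : π / p = π * a := by rw [hadef, mul_one_div]
  have hpb : π / (n:ℝ) = π * b := by rw [hbdef, mul_one_div]
  have hK : Real.sin (π / p) * (Real.cos (π / n) / Real.sin (π / n)) - Real.cos (π / p)
      = Real.sin (π*(a-b)) / Real.sin (π*b) := by
    rw [hpa, hpb, show π * (a - b) = π*a - π*b by ring, Real.sin_sub]
    field_simp
  -- combine
  rw [show -(1/p) = -a by rw [hadef]] at *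
  rw [hK]
  have heq : ((n:ℝ) * ∫ t in Ioi (1:ℝ), (t ^ n - 1) ^ (-a))
      * (Real.sin (π*(a-b)) / Real.sin (π*b))
      = (n:ℝ) * ∫ t in (0:ℝ)..1, (1 - t ^ n) ^ (-a) := by
    rw [hJ1, hJ2, hr]
  set J1 := ∫ t in Ioi (1:ℝ), (t ^ n - 1) ^ (-a)
  set J2 := ∫ t in (0:ℝ)..1, (1 - t ^ n) ^ (-a)
  rw [eq_div_iff (by positivity : (2:ℝ) * (Real.sin (π*(a-b)) / Real.sin (π*b)) ≠ 0)]
  have h' : (n:ℝ) * (J1 * Real.sin (π*(a-b))) = (n:ℝ) * (J2 * Real.sin (π*b)) := by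
    field_simp at heq
    rw [heq]; ring
  have h'' := mul_left_cancel₀ hn0.ne' h'
  field_simp
  linear_combination h''
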